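/- Under the hypotheses of the coercivity lemma, if additionally ‖F(u)‖ ≤ C_loss · L(u)^{1/2} for a nonnegative loss functional L, then for any e with ‖e‖ ≤ min(r, α/(2L)), ‖e‖ ≤ (2 C_loss/α) · L(u* + e)^{1/2}. -/

import Mathlib

/-- Residual-to-error bound: under the coercivity-lemma hypotheses, if in
addition `‖F u‖ ≤ C_loss √(Loss u)` for a nonnegative loss functional `Loss`,
then `‖e‖ ≤ (2 C_loss / α) √(Loss (uStar + e))` for `‖e‖ ≤ min(r, α/(2L))`. -/
theorem residual_to_error_bound
    {X : Type*} [NormedAddCommGroup X] [InnerProductSpace ℝ X] [CompleteSpace X]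
    (F : X → X) (uStar : X) (A : X →L[ℝ] X)
    (α L r Closs : ℝ) (hα : 0 < α) (hL : 0 ≤ L) (hC : 0 < Closs)
    (Loss : X → ℝ) (hLoss0 : ∀ u, 0 ≤ Loss u)
    (hF0 : F uStar = 0)
    (hcoer : ∀ w : X, α * ‖w‖ ^ 2 ≤ inner ℝ (A w) w)
    (hrem : ∀ w : X, ‖w‖ ≤ r → ‖F (uStar + w) - A w‖ ≤ L * ‖w‖ ^ 2)
    (hloss : ∀ u : X, ‖F u‖ ≤ Closs * Real.sqrt (Loss u)) :
    ∀ e : X, ‖e‖ ≤ r → L * ‖e‖ ≤ α / 2 →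
      ‖e‖ ≤ (2 * Closs / α) * Real.sqrt (Loss (uStar + e)) := by
  intro e her hel
  by_cases he : e = 0
  · subst he
    simp only [norm_zero]
    positivity
  have hne : 0 < ‖e‖ := norm_pos_iff.mpr he
  -- key: α ‖e‖² ≤ ⟪A e, e⟫ = ⟪F(u*+e), e⟫ + ⟪A e - F(u*+e), e⟫
  have h1 : (inner ℝ (A e) e : ℝ) ≤ ‖F (uStar + e)‖ * ‖e‖ + (L * ‖e‖ ^ 2) * ‖e‖ := by
    have hsplit : (inner ℝ (A e) e : ℝ)
        = inner ℝ (F (uStar + e)) e + inner ℝ (A e - F (uStar + e)) e := by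
      rw [inner_sub_left]; ring
    rw [hsplit]
    have h2 : (inner ℝ (F (uStar + e)) e : ℝ) ≤ ‖F (uStar + e)‖ * ‖e‖ :=
      real_inner_le_norm _ _
    have h3 : (inner ℝ (A e - F (uStar + e)) e : ℝ) ≤ (L * ‖e‖ ^ 2) * ‖e‖ := by
      calc (inner ℝ (A e - F (uStar + e)) e : ℝ)
          ≤ ‖A e - F (uStar + e)‖ * ‖e‖ := real_inner_le_norm _ _
        _ ≤ (L * ‖e‖ ^ 2) * ‖e‖ := by
            have := hrem e her
            rw [← norm_neg, neg_sub] at this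
            exact mul_le_mul_of_nonneg_right this hne.le
    linarith
  have hkey : α / 2 * ‖e‖ ^ 2 ≤ ‖F (uStar + e)‖ * ‖e‖ := by
    have hco := hcoer e
    have : (L * ‖e‖ ^ 2) * ‖e‖ ≤ (α / 2) * ‖e‖ ^ 2 := by
      have : L * ‖e‖ * ‖e‖ ^ 2 ≤ (α / 2) * ‖e‖ ^ 2 :=
        mul_le_mul_of_nonneg_right hel (by positivity)
      nlinarith [sq_nonneg ‖e‖]
    nlinarith
  have hF : α / 2 * ‖e‖ ≤ ‖F (uStar + e)‖ := by
    have := hkey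
    rw [sq] at this
    nlinarith
  have := hloss (uStar + e)
  have h4 : α / 2 * ‖e‖ ≤ Closs * Real.sqrt (Loss (uStar + e)) := le_trans hF this
  rw [div_mul_eq_mul_div, le_div_iff₀ hα]
  nlinarith
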